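/- Let x be a vector in R^d with ‖x‖ < 1 and define y = (1 - ‖x‖²)^{-1/2} x. Then the Jacobian determinant of the map x ↦ y equals (1 - ‖x‖²)^{-(d/2 + 1)}. -/

import Mathlib

open MeasureTheory Real Set Metric

theorem jacobian_ball_to_space (d : ℕ) (x : EuclideanSpace ℝ (Fin d)) (hx : ‖x‖ < 1) :
    |(fderiv ℝ (fun z : EuclideanSpace ℝ (Fin d) =>
        ((1 - ‖z‖ ^ 2) ^ (-(1/2 : ℝ))) • z) x).det| =
      (1 - ‖x‖ ^ 2) ^ (-((d : ℝ) / 2 + 1)) := by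
  have hA : (0:ℝ) < 1 - ‖x‖ ^ 2 := by nlinarith [norm_nonneg x]
  set A : ℝ := 1 - ‖x‖ ^ 2 with hAdef
  set c : ℝ := A ^ (-(1/2:ℝ)) with hc
  set b : ℝ := A ^ (-(3/2:ℝ)) with hb
  have hcpos : 0 < c := rpow_pos_of_pos hA _
  have hbpos : 0 < b := rpow_pos_of_pos hA _
  -- derivative of the scalar factor
  have hφ : HasFDerivAt (fun z : EuclideanSpace ℝ (Fin d) => (1 - ‖z‖ ^ 2) ^ (-(1/2:ℝ)))
      (b • innerSL ℝ x) x := by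
    have ht : HasFDerivAt (fun z : EuclideanSpace ℝ (Fin d) => 1 - ‖z‖ ^ 2)
        (-(2 • (innerSL ℝ x))) x := by
      have h := (hasFDerivAt_const (1:ℝ) x).sub ((hasFDerivAt_id x).norm_sq)
      refine h.congr_fderiv ?_
      ext v
      simp
    have hg : HasDerivAt (fun t : ℝ => t ^ (-(1/2:ℝ))) (-(1/2) * A ^ (-(1/2:ℝ) - 1)) A :=
      Real.hasDerivAt_rpow_const (Or.inl hA.ne')
    have h2 := hg.comp_hasFDerivAt x ht
    refine h2.congr_fderiv ?_
    ext v
    have he : (-(1/2:ℝ) - 1) = -(3/2:ℝ) := by norm_num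
    simp only [he, hb, ContinuousLinearMap.smul_apply, ContinuousLinearMap.neg_apply,
      smul_eq_mul]
    ring
  have hf : HasFDerivAt (fun z : EuclideanSpace ℝ (Fin d) => ((1 - ‖z‖ ^ 2) ^ (-(1/2:ℝ))) • z)
      (c • (ContinuousLinearMap.id ℝ (EuclideanSpace ℝ (Fin d))) +
        (b • innerSL ℝ x).smulRight x) x := hφ.smul (hasFDerivAt_id x)
  rw [hf.fderiv]
  have hnx : ∑ i, x i * x i = ‖x‖ ^ 2 := by
    rw [← real_inner_self_eq_norm_sq, PiLp.inner_apply]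
    simp [PiLp.inner_apply, pow_two]
  have hM : LinearMap.toMatrix (PiLp.basisFun 2 ℝ (Fin d)) (PiLp.basisFun 2 ℝ (Fin d))
      ((c • (ContinuousLinearMap.id ℝ (EuclideanSpace ℝ (Fin d))) +
        (b • innerSL ℝ x).smulRight x : _ →L[ℝ] _) : _ →ₗ[ℝ] _)
      = c • (1 + Matrix.replicateCol Unit (fun i => x i) * Matrix.replicateRow Unit (fun i => (b/c) * x i)) := by
    ext i j
    simp only [LinearMap.toMatrix_apply, ContinuousLinearMap.coe_coe,
      ContinuousLinearMap.add_apply, ContinuousLinearMap.smul_apply,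
      ContinuousLinearMap.id_apply, ContinuousLinearMap.smulRight_apply,
      innerSL_apply_apply, PiLp.basisFun_apply, PiLp.basisFun_repr,
      Matrix.smul_apply, Matrix.add_apply, Matrix.one_apply, Matrix.mul_apply,
      Matrix.replicateCol_apply, Matrix.replicateRow_apply, Finset.sum_const, Finset.card_univ,
      smul_eq_mul]
    have hinner : (inner ℝ x (PiLp.single 2 j 1) : ℝ) = x j := by
      simp [PiLp.inner_apply, Pi.single_apply, mul_comm, PiLp.ofLp_single]
    rw [hinner]
    simp only [PiLp.add_apply, PiLp.smul_apply, smul_eq_mul, Fintype.card_unit, one_smul,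
      PiLp.ofLp_single]
    rcases eq_or_ne i j with rfl | hij
    · simp only [Pi.single_eq_same, if_pos rfl, ↓reduceIte]
      field_simp
    · simp only [Pi.single_eq_of_ne hij, if_neg hij]
      field_simp
  rw [ContinuousLinearMap.det, ← LinearMap.det_toMatrix (PiLp.basisFun 2 ℝ (Fin d)), hM,
    Matrix.det_smul, Matrix.det_one_add_replicateCol_mul_replicateRow]
  have hdot : (dotProduct (fun i => b / c * x i) fun i => x i) = (b/c) * ‖x‖ ^ 2 := by
    simp only [dotProduct]
    rw [← hnx, Finset.mul_sum]
    exact Finset.sum_congr rfl fun i _ => by ring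
  have hbc : b / c = A⁻¹ := by
    rw [hb, hc, ← Real.rpow_sub hA, ← Real.rpow_neg_one A]
    norm_num
  rw [Fintype.card_fin, hdot, hbc]
  have h1 : 1 + A⁻¹ * ‖x‖ ^ 2 = A⁻¹ := by
    field_simp
    rw [hAdef]
    ring
  rw [h1]
  have h2 : c ^ d * A⁻¹ = A ^ (-((d:ℝ)/2 + 1)) := by
    rw [hc, ← Real.rpow_natCast (A ^ (-(1/2:ℝ))) d, ← Real.rpow_mul hA.le,
      ← Real.rpow_neg_one A, ← Real.rpow_add hA]
    congr 1
    ring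
  rw [h2, abs_of_pos (rpow_pos_of_pos hA _)]
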